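/- arXiv:1809.07714 — 5 statements merged into one kernel-verified Lean document; each statement's English description precedes it below -/
import Mathlib

section
/- Let p be prime, l ≥ 0 an integer, and f : Z_p → Q_p a continuous function with wavelet expansion f = ∑_k a_k χ_k. If v_p(f(0)) ≥ Δ(f) + l, then Δ(f ∘ [p^l]) ≥ Δ(f) + l, where [p^l] : Z_p → Z_p denotes multiplication by p^l. -/
open scoped Classical

/-- `l(k)`: `l(0) = 0` and `l(k) = ⌊log_p k⌋ + 1` for `k > 0`. -/
def waveletLevel (p k : ℕ) : ℕ := if k = 0 then 0 else Nat.log p k + 1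

/-- `k₋`: the natural number obtained from `k` by deleting the top digit of its
`p`-adic expansion, i.e. `k % p^(l(k)-1)`. -/
def waveletPred (p k : ℕ) : ℕ := k % p ^ (waveletLevel p k - 1)

/-- The wavelet coefficients of a function `f : ℤ_p → ℚ_p`:
`a_0 = f(0)` and `a_k = f(k) - f(k₋)` for `k > 0`. -/
noncomputable def waveletCoeff (p : ℕ) [Fact p.Prime] (f : ℤ_[p] → ℚ_[p]) (k : ℕ) : ℚ_[p] :=
  if k = 0 then f 0 else f (k : ℤ_[p]) - f ((waveletPred p k : ℕ) : ℤ_[p])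

/-- The extended `p`-adic valuation, with `v_p(0) = ⊤`. -/
noncomputable def valE (p : ℕ) [Fact p.Prime] (x : ℚ_[p]) : EReal :=
  if x = 0 then ⊤ else ((x.valuation : ℝ) : EReal)

/-- `Δ(f) = inf_k (v_p(a_k) - l(k))`, where `f = ∑_k a_k χ_k` is the wavelet expansion. -/
noncomputable def waveletDelta (p : ℕ) [Fact p.Prime] (f : ℤ_[p] → ℚ_[p]) : EReal :=
  ⨅ k : ℕ, (valE p (waveletCoeff p f k) - ((waveletLevel p k : ℝ) : EReal))

private lemma log_pow_mul (p l k : ℕ) (hp : 1 < p) (hk : k ≠ 0) :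
    Nat.log p (p ^ l * k) = l + Nat.log p k := by
  induction l with
  | zero => simp
  | succ n ih =>
      have : p ^ (n + 1) * k = (p ^ n * k) * p := by ring
      rw [this, Nat.log_mul_base hp (by positivity), ih]
      omega

private lemma level_pow_mul (p l k : ℕ) (hp : 1 < p) (hk : k ≠ 0) :
    waveletLevel p (p ^ l * k) = l + waveletLevel p k := by
  have h1 : p ^ l * k ≠ 0 := by positivity
  simp [waveletLevel, h1, hk, log_pow_mul p l k hp hk]
  omega

private lemma pred_pow_mul (p l k : ℕ) (hp : 1 < p) (hk : k ≠ 0) :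
    waveletPred p (p ^ l * k) = p ^ l * waveletPred p k := by
  have hL : 1 ≤ waveletLevel p k := by simp [waveletLevel, hk]
  unfold waveletPred
  rw [level_pow_mul p l k hp hk]
  have : l + waveletLevel p k - 1 = l + (waveletLevel p k - 1) := by omega
  rw [this, pow_add, Nat.mul_mod_mul_left]




/-- If `v_p(f(0)) ≥ Δ(f) + l`, then `Δ(f ∘ [p^l]) ≥ Δ(f) + l`, where `[p^l]`
denotes multiplication by `p^l` on `ℤ_p`. -/
theorem waveletDelta_comp_pPow (p : ℕ) [Fact p.Prime] (l : ℕ) (f : ℤ_[p] → ℚ_[p])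
    (hf : Continuous f)
    (h0 : waveletDelta p f + ((l : ℝ) : EReal) ≤ valE p (f 0)) :
    waveletDelta p f + ((l : ℝ) : EReal) ≤
      waveletDelta p (fun x => f ((p : ℤ_[p]) ^ l * x)) := by
  have hp : 1 < p := (Fact.out : p.Prime).one_lt
  set g : ℤ_[p] → ℚ_[p] := fun x => f ((p : ℤ_[p]) ^ l * x) with hg
  conv_rhs => rw [waveletDelta]
  refine le_iInf fun k => ?_
  rcases eq_or_ne k 0 with rfl | hk
  · -- the `k = 0` term is `valE p (f 0) - 0`
    have : waveletCoeff p g 0 = f 0 := by simp [waveletCoeff, hg]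
    rw [this]
    simpa [waveletLevel] using h0
  · -- `k > 0`: the coefficient of `g` at `k` equals that of `f` at `p^l * k`
    have hcoeff : waveletCoeff p g k = waveletCoeff p f (p ^ l * k) := by
      have h1 : p ^ l * k ≠ 0 := by positivity
      simp only [waveletCoeff, hk, if_neg h1, hg,
        pred_pow_mul p l k hp hk]
      push_cast
      ring_nf
    rw [hcoeff]
    have h2 : waveletDelta p f ≤
        valE p (waveletCoeff p f (p ^ l * k)) -
          ((waveletLevel p (p ^ l * k) : ℝ) : EReal) :=
      iInf_le _ (p ^ l * k)
    rw [level_pow_mul p l k hp hk] at h2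
    set v := valE p (waveletCoeff p f (p ^ l * k)) with hv
    rcases eq_or_ne (waveletCoeff p f (p ^ l * k)) 0 with hz | hz
    · have : v = ⊤ := by simp [hv, valE, hz]
      rw [this]
      rw [EReal.top_sub_coe]
      exact le_top
    · have hvr : v = ((waveletCoeff p f (p ^ l * k)).valuation : ℝ) := by
        simp [hv, valE, hz]
      set r : ℝ := ((waveletCoeff p f (p ^ l * k)).valuation : ℝ)
      rw [hvr] at h2 ⊢
      have key : ((r : EReal) - (((l + waveletLevel p k : ℕ) : ℝ) : EReal))
          + ((l : ℝ) : EReal)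
          = (r : EReal) - ((waveletLevel p k : ℝ) : EReal) := by
        rw [← EReal.coe_sub, ← EReal.coe_add, ← EReal.coe_sub]
        congr 1
        push_cast
        ring
      calc waveletDelta p f + ((l : ℝ) : EReal)
          ≤ ((r : EReal) - (((l + waveletLevel p k : ℕ) : ℝ) : EReal))
              + ((l : ℝ) : EReal) := add_le_add_left h2 _
        _ = (r : EReal) - ((waveletLevel p k : ℝ) : EReal) := key
end

section
/- Let s > 1 be an integer and x ∈ Q_p with |x|_p ≥ q_p (where q_p = p for odd p and q_2 = 4). Then ω(x)^{1−s}·ζ_p(s,x) = (1/(s−1))·lim_{r→∞} p^{−r} ∑_{0≤m<p^r} (x+m)^{1−s}, i.e., ω(x)^{1−s}ζ_p(s,x) equals 1/(s−1) times the Volkenborn integral of t ↦ (x+t)^{1−s}. -/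
open Filter

lemma aux_norm_pow_sub_one {p : ℕ} [Fact p.Prime] (ζ : ℚ_[p]) (hζ : ‖ζ‖ ≤ 1) (k : ℕ) :
    ‖ζ ^ k - 1‖ ≤ ‖ζ - 1‖ := by
  induction k with
  | zero => simp
  | succ n ih =>
    have : ζ ^ (n+1) - 1 = ζ ^ n * (ζ - 1) + (ζ ^ n - 1) := by ring
    rw [this]
    refine (Padic.nonarchimedean _ _).trans (max_le ?_ ih)
    rw [norm_mul]
    calc ‖ζ ^ n‖ * ‖ζ - 1‖ ≤ 1 * ‖ζ - 1‖ := by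
          gcongr; rw [norm_pow]; exact pow_le_one₀ (norm_nonneg _) hζ
      _ = ‖ζ - 1‖ := one_mul _

lemma aux_root_eq_one {p : ℕ} [Fact p.Prime] (n : ℕ) (ζ : ℚ_[p]) (hn : ζ ^ n = 1)
    (c : ℝ) (hc : c < ‖(n : ℚ_[p])‖) (hζc : ‖ζ - 1‖ ≤ c) (hc1 : c < 1) : ζ = 1 := by
  have hc0 : (0:ℝ) ≤ c := le_trans (norm_nonneg _) hζc
  have hζ1 : ‖ζ‖ ≤ 1 := by
    calc ‖ζ‖ = ‖(ζ - 1) + 1‖ := by ring_nf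
      _ ≤ max ‖ζ - 1‖ ‖(1:ℚ_[p])‖ := Padic.nonarchimedean _ _
      _ ≤ 1 := max_le (hζc.trans hc1.le) (by simp)
  by_contra hne
  have h1 : (∑ k ∈ Finset.range n, ζ ^ k) * (ζ - 1) = 0 := by
    rw [geom_sum_mul, hn, sub_self]
  have h2 : ∑ k ∈ Finset.range n, ζ ^ k = 0 := by
    rcases mul_eq_zero.mp h1 with h | h
    · exact h
    · exact absurd (sub_eq_zero.mp h) hne
  have h3 : ‖(∑ k ∈ Finset.range n, ζ ^ k) - n‖ ≤ c := by
    have he : (∑ k ∈ Finset.range n, ζ ^ k) - n = ∑ k ∈ Finset.range n, (ζ ^ k - 1) := by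
      rw [Finset.sum_sub_distrib]; simp
    rw [he]
    exact IsUltrametricDist.norm_sum_le_of_forall_le_of_nonneg hc0
      fun k _ => (aux_norm_pow_sub_one ζ hζ1 k).trans hζc
  rw [h2, zero_sub, norm_neg] at h3
  exact absurd h3 (not_le.mpr hc)


lemma aux_norm_eq_one {p : ℕ} [Fact p.Prime] (a : ℚ_[p]) (h : ‖a - 1‖ < 1) : ‖a‖ = 1 := by
  have he : a = (a - 1) + 1 := by ring
  rw [he, Padic.add_eq_max_of_ne (by rw [norm_one]; exact h.ne), norm_one, max_eq_right h.le]

/-- For an integer `s > 1` and `x ∈ ℚ_p` with `|x|_p ≥ q_p` (where `q_p = p` for odd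
`p` and `q_2 = 4`), one has
`ω(x)^{1-s} ζ_p(s,x) = (1/(s-1)) · lim_r p^{-r} ∑_{0 ≤ m < p^r} (x+m)^{1-s}`.
Here `ω` is the extended Teichmüller character, characterized by: for `y ≠ 0`,
`ω(y) = p^{v_p(y)} ζ` with `ζ^{φ(q_p)} = 1`, and `⟨y⟩ = y/ω(y) ∈ 1 + q_p ℤ_p`;
and `ζ_p(s,x)` is the `p`-adic Hurwitz zeta value, defined by the Volkenborn
integral `ζ_p(s,x) = (1/(s-1)) ∫_{ℤ_p} ⟨x+t⟩^{1-s} dt`. -/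
theorem padicHurwitz_volkenborn (p : ℕ) [Fact p.Prime]
    (qp : ℕ) (hqp : qp = if p = 2 then 4 else p)
    (s : ℕ) (hs : 1 < s)
    (x : ℚ_[p]) (hx : (qp : ℝ) ≤ ‖x‖)
    (ω : ℚ_[p] → ℚ_[p])
    (hω : ∀ y : ℚ_[p], y ≠ 0 →
      (∃ ζ : ℚ_[p], ζ ^ Nat.totient qp = 1 ∧
        ω y = (p : ℚ_[p]) ^ (y.valuation) * ζ) ∧ ‖y / ω y - 1‖ ≤ ((qp : ℝ))⁻¹)
    (Z : ℚ_[p])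
    (hZ : Tendsto
      (fun r : ℕ => ((p : ℚ_[p]) ^ r)⁻¹ *
        ∑ m ∈ Finset.range (p ^ r), ((x + (m : ℚ_[p])) / ω (x + (m : ℚ_[p]))) ^ ((1 : ℤ) - s))
      atTop (nhds (((s : ℚ_[p]) - 1) * Z))) :
    Tendsto
      (fun r : ℕ => ((p : ℚ_[p]) ^ r)⁻¹ *
        ∑ m ∈ Finset.range (p ^ r), (x + (m : ℚ_[p])) ^ ((1 : ℤ) - s))
      atTop (nhds (((s : ℚ_[p]) - 1) * ((ω x) ^ ((1 : ℤ) - s) * Z))) := by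
  have hp : p.Prime := Fact.out
  -- basic facts about qp
  have hq1 : 1 < qp := by
    rw [hqp]; split
    · norm_num
    · exact hp.one_lt
  have hq1R : (1:ℝ) < (qp:ℝ) := by exact_mod_cast hq1
  have hq0R : (0:ℝ) < (qp:ℝ) := lt_trans one_pos hq1R
  have hinvlt : ((qp:ℝ))⁻¹ < 1 := by
    rw [inv_lt_one_iff₀]; right; exact hq1R
  have hnorm_tot : ((qp:ℝ))⁻¹ < ‖((Nat.totient qp : ℕ) : ℚ_[p])‖ := by
    by_cases hp2 : p = 2
    · subst hp2
      have hq4 : qp = 4 := by simpa using hqp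
      subst hq4
      have : (Nat.totient 4) = 2 := by decide
      rw [this]
      have h2 : ((2:ℕ) : ℚ_[2]) = ((2:ℕ) : ℚ_[2]) := rfl
      have : ‖((2:ℕ) : ℚ_[2])‖ = (2:ℝ)⁻¹ := by
        simpa using Padic.norm_p (p := 2)
      rw [this]
      norm_num
    · have hqpp : qp = p := by simp [hqp, hp2]
      rw [hqpp] at hinvlt ⊢
      rw [Nat.totient_prime hp]
      have hple : ‖(((p - 1 : ℕ)) : ℚ_[p])‖ ≤ 1 := by
        have := Padic.norm_int_le_one (p := p) ((p:ℤ) - 1)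
        have hcast : (((p - 1 : ℕ)) : ℚ_[p]) = (((p:ℤ) - 1 : ℤ) : ℚ_[p]) := by
          push_cast [Nat.cast_sub hp.one_lt.le]; ring
        rwa [hcast]
      have hplt : ¬ ‖(((p - 1 : ℕ)) : ℚ_[p])‖ < 1 := by
        have hcast : (((p - 1 : ℕ)) : ℚ_[p]) = (((p:ℤ) - 1 : ℤ) : ℚ_[p]) := by
          push_cast [Nat.cast_sub hp.one_lt.le]; ring
        rw [hcast, Padic.norm_intCast_lt_one_iff]
        intro hdvd
        have h1 : 1 < p := hp.one_lt
        have hle := Int.le_of_dvd (by have h2 : (1:ℤ) < (p:ℤ) := (by exact_mod_cast h1); linarith : (0:ℤ) < (p:ℤ) - 1) hdvd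
        omega
      have : ‖(((p - 1 : ℕ)) : ℚ_[p])‖ = 1 := le_antisymm hple (not_lt.mp hplt)
      rw [this]
      exact hinvlt
  have hpQ : (p : ℚ_[p]) ≠ 0 := Nat.cast_ne_zero.mpr hp.pos.ne'
  have hxne : x ≠ 0 := by
    intro h; rw [h, norm_zero] at hx; linarith
  have hωxne : ω x ≠ 0 := by
    intro h
    have h2 := (hω x hxne).2
    rw [h, div_zero, zero_sub, norm_neg, norm_one] at h2
    linarith
  have key : ∀ m : ℕ, ω (x + (m : ℚ_[p])) = ω x := by
    intro m
    have hm1 : ‖((m : ℕ) : ℚ_[p])‖ ≤ 1 := by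
      have h := Padic.norm_int_le_one (p := p) (m : ℤ)
      push_cast at h ⊢; exact h
    have hmx : ‖((m : ℕ) : ℚ_[p])‖ < ‖x‖ := lt_of_le_of_lt hm1 (lt_of_lt_of_le hq1R hx)
    have hnormadd : ‖x + (m : ℚ_[p])‖ = ‖x‖ := by
      rw [Padic.add_eq_max_of_ne (ne_of_gt hmx), max_eq_left hmx.le]
    have hxmne : x + (m : ℚ_[p]) ≠ 0 := by
      intro h
      rw [h, norm_zero] at hnormadd
      rw [← hnormadd] at hx; linarith
    have hval : (x + (m : ℚ_[p])).valuation = x.valuation := by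
      have h1 := Padic.norm_eq_zpow_neg_valuation hxmne
      have h2 := Padic.norm_eq_zpow_neg_valuation hxne
      rw [hnormadd, h2] at h1
      have hp0 : (0:ℝ) < (p:ℝ) := by exact_mod_cast hp.pos
      have hp1 : (p:ℝ) ≠ 1 := by exact_mod_cast hp.one_lt.ne'
      have h3 := zpow_right_injective₀ hp0 hp1 h1
      omega
    obtain ⟨⟨ζ₂, hζ₂, hωx⟩, hax⟩ := hω x hxne
    obtain ⟨⟨ζ₁, hζ₁, hωxm⟩, haxm⟩ := hω _ hxmne
    have htot0 : Nat.totient qp ≠ 0 := (Nat.totient_pos.mpr (by omega)).ne'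
    have hζ₂ne : ζ₂ ≠ 0 := by
      intro h; rw [h, zero_pow htot0] at hζ₂; exact zero_ne_one hζ₂
    have hζ₁ne : ζ₁ ≠ 0 := by
      intro h; rw [h, zero_pow htot0] at hζ₁; exact zero_ne_one hζ₁
    have hpv : ((p : ℚ_[p]) ^ x.valuation) ≠ 0 := zpow_ne_zero _ hpQ
    have hωxmne : ω (x + (m : ℚ_[p])) ≠ 0 := by
      rw [hωxm]; exact mul_ne_zero (zpow_ne_zero _ hpQ) hζ₁ne
    set a := x / ω x with ha
    set b := (x + (m : ℚ_[p])) / ω (x + (m : ℚ_[p])) with hb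
    have hna : ‖a‖ = 1 := aux_norm_eq_one a (lt_of_le_of_lt hax hinvlt)
    have hnb : ‖b‖ = 1 := aux_norm_eq_one b (lt_of_le_of_lt haxm hinvlt)
    have hane : a ≠ 0 := by intro h; rw [h, norm_zero] at hna; norm_num at hna
    have hbne : b ≠ 0 := by intro h; rw [h, norm_zero] at hnb; norm_num at hnb
    set ζ : ℚ_[p] := ζ₁ * ζ₂⁻¹ with hζdef
    have hζpow : ζ ^ Nat.totient qp = 1 := by
      rw [hζdef, mul_pow, inv_pow, hζ₁, hζ₂]; norm_num
    have hζeq : ζ = ((x + (m : ℚ_[p])) / x) * a * b⁻¹ := by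
      rw [hζdef, ha, hb]
      rw [hωxm, hωx, hval]
      field_simp
    have hu : ‖(x + (m : ℚ_[p])) / x - 1‖ ≤ ((qp:ℝ))⁻¹ := by
      have he : (x + (m : ℚ_[p])) / x - 1 = (m : ℚ_[p]) / x := by field_simp; ring
      rw [he, norm_div]
      rw [div_le_iff₀ (lt_of_lt_of_le hq0R hx)]
      calc ‖((m : ℕ) : ℚ_[p])‖ ≤ 1 := hm1
        _ = ((qp:ℝ))⁻¹ * (qp:ℝ) := by rw [inv_mul_cancel₀ hq0R.ne']
        _ ≤ ((qp:ℝ))⁻¹ * ‖x‖ := by gcongr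
    have hbinv : ‖b⁻¹ - 1‖ ≤ ((qp:ℝ))⁻¹ := by
      have he : b⁻¹ - 1 = (1 - b) * b⁻¹ := by field_simp
      rw [he, norm_mul, norm_inv, hnb, inv_one, mul_one, norm_sub_rev]
      exact haxm
    have hζnear : ‖ζ - 1‖ ≤ ((qp:ℝ))⁻¹ := by
      rw [hζeq]
      have hdec : ((x + (m : ℚ_[p])) / x) * a * b⁻¹ - 1
          = ((x + (m : ℚ_[p])) / x - 1) * a * b⁻¹ + ((a - 1) * b⁻¹ + (b⁻¹ - 1)) := by ring
      rw [hdec]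
      refine (Padic.nonarchimedean _ _).trans (max_le ?_
        ((Padic.nonarchimedean _ _).trans (max_le ?_ hbinv)))
      · rw [norm_mul, norm_mul, hna, norm_inv, hnb, inv_one, mul_one, mul_one]; exact hu
      · rw [norm_mul, norm_inv, hnb, inv_one, mul_one]; exact hax
    have hζone : ζ = 1 := aux_root_eq_one (Nat.totient qp) ζ hζpow _ hnorm_tot hζnear hinvlt
    have hζ12 : ζ₁ = ζ₂ := by
      have := hζone
      rw [hζdef] at this
      field_simp at this
      exact this
    rw [hωxm, hωx, hval, hζ12]
  -- final limit manipulation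
  have hc : (ω x) ^ ((1:ℤ) - s) ≠ 0 := zpow_ne_zero _ hωxne
  have h2 := hZ.const_mul ((ω x) ^ ((1:ℤ) - s))
  have hlim : ((s:ℚ_[p]) - 1) * ((ω x) ^ ((1:ℤ) - s) * Z)
      = (ω x) ^ ((1:ℤ) - s) * (((s:ℚ_[p]) - 1) * Z) := by ring
  rw [hlim]
  refine h2.congr fun r => ?_
  have hsum : ∑ m ∈ Finset.range (p ^ r), ((x + (m : ℚ_[p])) / ω (x + (m : ℚ_[p]))) ^ ((1:ℤ) - s)
      = (∑ m ∈ Finset.range (p ^ r), (x + (m : ℚ_[p])) ^ ((1:ℤ) - s)) / (ω x) ^ ((1:ℤ) - s) := by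
    rw [Finset.sum_div]
    refine Finset.sum_congr rfl fun m _ => ?_
    rw [key m, div_zpow]
  rw [hsum]
  rw [mul_left_comm]
  congr 1
  rw [mul_div_cancel₀ _ hc]
end

section
/- Let λ, n, m be nonnegative integers with λ ≤ n, and let d_n = lcm(1, ..., n). Then the polynomial d_n^λ · (∂/∂t)^λ [ binom(m; n,n,...,n) · C(t, m) ] ∈ Q[t] is integer-valued, where binom(m; n,...,n) is the multinomial coefficient with ⌊m/n⌋ copies of n, and C(t, m) = t(t−1)⋯(t−m+1)/m! is the binomial polynomial. -/
/-- The binomial polynomial `C(t, m) = t(t-1)⋯(t-m+1)/m!`. -/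
noncomputable def binomPoly (m : ℕ) : Polynomial ℚ :=
  ((m.factorial : ℚ))⁻¹ • descPochhammer ℚ m

/-- The multinomial coefficient `binom(m; n, …, n)` with `⌊m/n⌋` copies of `n`,
i.e. `m! / (n!^{⌊m/n⌋} · (m - n⌊m/n⌋)!)`. -/
def multinomRep (m n : ℕ) : ℕ :=
  m.factorial / (n.factorial ^ (m / n) * (m - n * (m / n)).factorial)

/-- `d_n = lcm(1, …, n)`. -/
def dlcm (n : ℕ) : ℕ := (Finset.Icc 1 n).lcm id

open Polynomial Finset

def IV (P : Polynomial ℚ) : Prop := ∀ z : ℤ, ∃ a : ℤ, P.eval (z : ℚ) = a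

lemma IV.add {P Q} (hP : IV P) (hQ : IV Q) : IV (P + Q) := by
  intro z; obtain ⟨a, ha⟩ := hP z; obtain ⟨b, hb⟩ := hQ z
  exact ⟨a + b, by simp [ha, hb]⟩

lemma IV.mul {P Q} (hP : IV P) (hQ : IV Q) : IV (P * Q) := by
  intro z; obtain ⟨a, ha⟩ := hP z; obtain ⟨b, hb⟩ := hQ z
  exact ⟨a * b, by simp [ha, hb]⟩

lemma IV.zsmul {P} (hP : IV P) (c : ℤ) : IV ((c : ℚ) • P) := by
  intro z; obtain ⟨a, ha⟩ := hP z
  exact ⟨c * a, by simp [ha]⟩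

lemma IV.nsmul {P} (hP : IV P) (c : ℕ) : IV (c • P) := by
  intro z; obtain ⟨a, ha⟩ := hP z
  exact ⟨c * a, by simp [ha]⟩

lemma IV.sum {s : Finset ℕ} {f : ℕ → Polynomial ℚ} (h : ∀ i ∈ s, IV (f i)) :
    IV (∑ i ∈ s, f i) := by
  classical
  induction s using Finset.induction with
  | empty => exact fun z => ⟨0, by simp⟩
  | @insert a s hx ih =>
    rw [Finset.sum_insert hx]
    exact (h a (Finset.mem_insert_self a s)).add (ih fun i hi => h i (Finset.mem_insert_of_mem hi))

lemma factorial_dvd_descPochhammer_int_eval (k : ℕ) (z : ℤ) :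
    (k.factorial : ℤ) ∣ (descPochhammer ℤ k).eval z := by
  rcases le_or_gt 0 z with hz | hz
  · lift z to ℕ using hz
    rw [descPochhammer_eval_eq_descFactorial]
    exact_mod_cast Int.natCast_dvd_natCast.mpr (Nat.factorial_dvd_descFactorial z k)
  · have h := ascPochhammer_eval_neg_eq_descPochhammer (R := ℤ) z k
    have h2 : (descPochhammer ℤ k).eval z = (-1)^k * (ascPochhammer ℤ k).eval (-z) := by
      rw [h]; ring_nf; rw [mul_comm k 2, pow_mul]; simp
    rw [h2]
    have hw : (0:ℤ) ≤ -z := by omega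
    obtain ⟨w, hw2⟩ := Int.eq_ofNat_of_zero_le hw
    have h3 : (ascPochhammer ℤ k).eval (-z) = (w.ascFactorial k : ℤ) := by
      rw [hw2, ← ascPochhammer_nat_eq_ascFactorial]
      exact (ascPochhammer_eval_cast (S := ℤ) k w).symm
    rw [h3]
    exact Dvd.dvd.mul_left
      (Int.natCast_dvd_natCast.mpr (Nat.factorial_dvd_ascFactorial w k)) _

lemma iv_binomPoly (k : ℕ) : IV (binomPoly k) := by
  intro z
  obtain ⟨a, ha⟩ := factorial_dvd_descPochhammer_int_eval k z
  refine ⟨a, ?_⟩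
  have h1 : ((((descPochhammer ℤ k).eval z : ℤ)) : ℚ) = (descPochhammer ℚ k).eval ((z : ℤ) : ℚ) :=
    descPochhammer_eval_cast (R := ℚ) k z
  rw [_root_.binomPoly, eval_smul, smul_eq_mul, ← h1, ha]
  push_cast
  rw [mul_comm]
  field_simp

noncomputable def fd (P : Polynomial ℚ) : Polynomial ℚ := P.comp (X + 1) - P

lemma fd_smul (c : ℚ) (P) : fd (c • P) = c • fd P := by
  simp [fd, smul_comp, smul_sub]

lemma fd_sub (P Q) : fd (P - Q) = fd P - fd Q := by
  simp only [fd, sub_comp]; ring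

lemma fd_sum {s : Finset ℕ} {f : ℕ → Polynomial ℚ} :
    fd (∑ i ∈ s, f i) = ∑ i ∈ s, fd (f i) := by
  simp only [fd, eval_geom_sum]
  rw [Polynomial.sum_comp, ← Finset.sum_sub_distrib]

lemma natDegree_fd_le {P : Polynomial ℚ} {N : ℕ} (h : P.natDegree ≤ N + 1) :
    (fd P).natDegree ≤ N := by
  by_cases h0 : fd P = 0
  · simp [h0]
  by_cases hc : P.natDegree = 0
  · exfalso
    obtain ⟨a, rfl⟩ := Polynomial.natDegree_eq_zero.mp hc
    simp [fd] at h0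
  have hP : P ≠ 0 := fun hh => by simp [hh, fd] at h0
  have hx1 : (X + 1 : Polynomial ℚ) = X + C 1 := by simp
  have hnd1 : (X + 1 : Polynomial ℚ).natDegree = 1 := by
    rw [hx1, Polynomial.natDegree_X_add_C]
  have hcomp : P.comp (X + 1) ≠ 0 := by
    intro hh
    apply hP
    have h3 := congrArg (fun p : Polynomial ℚ => p.comp (X - 1)) hh
    simp only [Polynomial.comp_assoc, Polynomial.zero_comp] at h3
    have e1 : ((X : Polynomial ℚ) + 1).comp (X - 1) = X := by
      rw [Polynomial.add_comp, Polynomial.X_comp, Polynomial.one_comp]; ring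
    rwa [e1, Polynomial.comp_X] at h3
  have hdeg : (P.comp (X + 1)).natDegree = P.natDegree := by
    rw [Polynomial.natDegree_comp, hnd1, mul_one]
  have hdeg' : (P.comp (X + 1)).degree = P.degree := by
    rw [Polynomial.degree_eq_natDegree hcomp, Polynomial.degree_eq_natDegree hP, hdeg]
  have hlc : (P.comp (X + 1)).leadingCoeff = P.leadingCoeff := by
    rw [Polynomial.leadingCoeff_comp (by rw [hnd1]; norm_num)]
    rw [hx1, Polynomial.leadingCoeff_X_add_C, one_pow, mul_one]
  have hlt : (fd P).degree < P.degree := by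
    have := Polynomial.degree_sub_lt hdeg' hcomp hlc
    rw [hdeg'] at this
    exact this
  have := Polynomial.natDegree_lt_natDegree h0 hlt
  omega

lemma dp_comp_succ (k : ℕ) :
    (descPochhammer ℚ (k+1)).comp (X + 1) - descPochhammer ℚ (k+1)
      = ((k : ℚ) + 1) • descPochhammer ℚ k := by
  have h := descPochhammer_succ_comp_X_sub_one (R := ℚ) k
  have h2 := congrArg (fun p : Polynomial ℚ => p.comp (X + 1)) h
  rw [smul_eq_mul] at h2
  have e1 : ((X : Polynomial ℚ) - 1).comp (X + 1) = X := by
    rw [Polynomial.sub_comp, Polynomial.X_comp, Polynomial.one_comp]; ring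
  simp only [Polynomial.sub_comp, Polynomial.mul_comp, Polynomial.comp_assoc, e1,
    Polynomial.comp_X] at h2
  have e2 : ((k : ℚ) + 1) • descPochhammer ℚ k
      = ((k : Polynomial ℚ) + 1) * descPochhammer ℚ k := by
    rw [Polynomial.smul_eq_C_mul, map_add, map_one, Polynomial.C_eq_natCast]
  rw [e2]
  have e3 : ((k:Polynomial ℚ) + 1).comp (X+1) = (k:Polynomial ℚ) + 1 := by
    rw [Polynomial.add_comp, Polynomial.natCast_comp, Polynomial.one_comp]
  rw [e3] at h2
  linear_combination -h2

lemma fd_binomPoly_succ (k : ℕ) : fd (binomPoly (k+1)) = binomPoly k := by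
  rw [binomPoly, fd_smul, fd, dp_comp_succ, binomPoly, smul_smul]
  congr 1
  rw [Nat.factorial_succ]
  push_cast
  rw [mul_comm]
  field_simp

lemma fd_binomPoly_zero : fd (binomPoly 0) = 0 := by
  simp [binomPoly, fd]

lemma binomPoly_eval_zero (k : ℕ) :
    (binomPoly k).eval 0 = if k = 0 then 1 else 0 := by
  rw [binomPoly, eval_smul, descPochhammer_eval_zero]
  split <;> simp_all [Nat.factorial]

lemma eq_zero_of_fd_eq_zero {S : Polynomial ℚ} (h : fd S = 0) (h0 : S.eval 0 = 0) :
    S = 0 := by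
  have hcomp : S.comp (X + 1) = S := by
    have := sub_eq_zero.mp h
    exact this
  have hn : ∀ n : ℕ, S.eval (n : ℚ) = 0 := by
    intro n
    induction n with
    | zero => simpa using h0
    | succ n ih =>
      have : S.eval ((n : ℚ) + 1) = (S.comp (X + 1)).eval (n : ℚ) := by
        rw [Polynomial.eval_comp]; simp
      rw [hcomp] at this
      push_cast
      rw [this, ih]
  apply Polynomial.eq_zero_of_infinite_isRoot
  apply Set.infinite_of_injective_forall_mem (f := fun n : ℕ => (n : ℚ))
  · exact fun a b hab => Nat.cast_injective hab
  · intro n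
    exact hn n

theorem newton : ∀ N (P : Polynomial ℚ), P.natDegree ≤ N →
    P = ∑ k ∈ range (N+1), ((fd^[k] P).eval 0) • binomPoly k := by
  intro N
  induction N with
  | zero =>
    intro P hP
    obtain ⟨a, rfl⟩ := Polynomial.natDegree_eq_zero.mp (Nat.le_zero.mp hP)
    simp only [zero_add, Finset.range_one, Finset.sum_singleton, Function.iterate_zero,
      id_eq, eval_C]
    rw [binomPoly]
    simp [Nat.factorial, Polynomial.smul_eq_C_mul]
  | succ N ih =>
    intro P hP
    set Q := fd P with hQdef
    have hQ : Q.natDegree ≤ N := natDegree_fd_le hP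
    have hQe := ih Q hQ
    set R := ∑ k ∈ range (N+2), ((fd^[k] P).eval 0) • binomPoly k with hRdef
    have hfdR : fd R = Q := by
      rw [hRdef, fd_sum]
      rw [Finset.sum_range_succ']
      simp only [fd_smul]
      rw [fd_binomPoly_zero, smul_zero, add_zero]
      rw [hQe]
      apply Finset.sum_congr rfl
      intro k hk
      rw [fd_binomPoly_succ, Function.iterate_succ_apply]
    have hR0 : R.eval 0 = P.eval 0 := by
      rw [hRdef]
      rw [Polynomial.eval_finset_sum]
      rw [Finset.sum_eq_single 0]
      · simp [binomPoly_eval_zero]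
      · intro k _ hk
        simp [binomPoly_eval_zero, hk]
      · intro h; simp at h
    have : P - R = 0 := by
      apply eq_zero_of_fd_eq_zero
      · rw [fd_sub, hfdR, hQdef, sub_self]
      · simp [hR0]
    rw [hRdef] at this
    exact sub_eq_zero.mp this



lemma fd_zero : fd 0 = 0 := by simp [fd]

lemma fd_binomPoly_zero' : fd (binomPoly 0) = 0 := by simp [binomPoly, fd]

lemma fd_derivative (P : Polynomial ℚ) : fd (derivative P) = derivative (fd P) := by
  rw [fd, fd, derivative_sub, Polynomial.derivative_comp]
  simp

lemma fd_iterate_smul (c : ℚ) (P : Polynomial ℚ) (i : ℕ) :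
    fd^[i] (c • P) = c • fd^[i] P := by
  induction i with
  | zero => simp
  | succ i ih => rw [Function.iterate_succ_apply', ih, fd_smul, Function.iterate_succ_apply']

lemma fd_iterate_derivative (P : Polynomial ℚ) (i : ℕ) :
    fd^[i] (derivative P) = derivative (fd^[i] P) := by
  induction i with
  | zero => simp
  | succ i ih => rw [Function.iterate_succ_apply', ih, fd_derivative,
      Function.iterate_succ_apply']

lemma fd_iterate_binomPoly (i k : ℕ) :
    fd^[i] (binomPoly k) = if i ≤ k then binomPoly (k - i) else 0 := by
  induction i with
  | zero => simp
  | succ i ih =>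
    rw [Function.iterate_succ_apply', ih]
    by_cases h : i + 1 ≤ k
    · have hik : i ≤ k := by omega
      have hki : k - i = (k - (i+1)) + 1 := by omega
      rw [if_pos hik, if_pos h, hki, fd_binomPoly_succ]
    · rw [if_neg h]
      by_cases h2 : i ≤ k
      · have : k - i = 0 := by omega
        rw [if_pos h2, this, fd_binomPoly_zero']
      · rw [if_neg h2, fd_zero]

lemma iv_fd {P : Polynomial ℚ} (h : IV P) : IV (fd P) := by
  intro z
  obtain ⟨a, ha⟩ := h (z + 1)
  obtain ⟨b, hb⟩ := h z
  refine ⟨a - b, ?_⟩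
  rw [fd, eval_sub, Polynomial.eval_comp]
  simp only [eval_add, eval_X, eval_one]
  have : (z : ℚ) + 1 = ((z + 1 : ℤ) : ℚ) := by push_cast; ring
  rw [this, ha, hb]
  push_cast; ring

lemma iv_fd_iterate {P : Polynomial ℚ} (h : IV P) (i : ℕ) : IV (fd^[i] P) := by
  induction i with
  | zero => simpa
  | succ i ih => rw [Function.iterate_succ_apply']; exact iv_fd ih

lemma deriv_dp_eval_zero (j : ℕ) :
    (derivative (descPochhammer ℚ (j+1))).eval 0 = (-1)^j * (j.factorial : ℚ) := by
  induction j with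
  | zero => simp [descPochhammer]
  | succ j ih =>
    rw [descPochhammer_succ_right, derivative_mul, eval_add, eval_mul, eval_mul,
      descPochhammer_eval_zero]
    simp only [Nat.add_eq_zero, and_false, if_false, derivative_sub, derivative_X,
      derivative_natCast, sub_zero, eval_sub, eval_X, eval_natCast, eval_one, ih]
    push_cast [Nat.factorial_succ]
    ring_nf
    simp



lemma iv_of_fd_int {P : Polynomial ℚ} (h : ∀ i, ∃ a : ℤ, (fd^[i] P).eval 0 = (a:ℚ)) :
    IV P := by
  rw [newton P.natDegree P le_rfl]
  apply IV.sum
  intro k _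
  obtain ⟨a, ha⟩ := h k
  rw [ha]
  exact (iv_binomPoly k).zsmul a

lemma dvd_dlcm {j n : ℕ} (h1 : 1 ≤ j) (h2 : j ≤ n) : j ∣ dlcm n := by
  have : j ∈ Finset.Icc 1 n := by simp [Finset.mem_Icc]; omega
  simpa [dlcm] using Finset.dvd_lcm (f := id) this

lemma derivative_binomPoly_zero : derivative (binomPoly 0) = 0 := by
  simp [binomPoly]

lemma lemD {n k : ℕ} (hk : k ≤ n) : IV ((dlcm n : ℚ) • derivative (binomPoly k)) := by
  apply iv_of_fd_int
  intro i
  rw [fd_iterate_smul, fd_iterate_derivative, fd_iterate_binomPoly]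
  by_cases h : i ≤ k
  · rw [if_pos h]
    rcases Nat.eq_zero_or_pos (k - i) with h0 | h0
    · rw [h0, derivative_binomPoly_zero]; exact ⟨0, by simp⟩
    · obtain ⟨j, hj⟩ : ∃ j, k - i = j + 1 := ⟨k - i - 1, by omega⟩
      rw [hj]
      have hderiv : derivative (binomPoly (j+1))
          = (((j+1).factorial : ℚ))⁻¹ • derivative (descPochhammer ℚ (j+1)) := by
        rw [binomPoly, derivative_smul]
      rw [hderiv, smul_smul, eval_smul, smul_eq_mul, deriv_dp_eval_zero]
      obtain ⟨e, he⟩ := dvd_dlcm (j := j+1) (n := n) (by omega) (by omega)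
      refine ⟨(-1)^j * e, ?_⟩
      rw [he]
      push_cast [Nat.factorial_succ]
      have hne : ((j:ℚ)+1) ≠ 0 := by positivity
      have hne2 : ((j.factorial : ℚ)) ≠ 0 := by positivity
      field_simp
  · rw [if_neg h]; exact ⟨0, by simp⟩

lemma lemK {n : ℕ} {P : Polynomial ℚ} (hIV : IV P) (hdeg : P.natDegree ≤ n) :
    IV ((dlcm n : ℚ) • derivative P) := by
  rw [newton n P hdeg, derivative_sum, Finset.smul_sum]
  apply IV.sum
  intro k hk
  obtain ⟨a, ha⟩ := iv_fd_iterate hIV k 0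
  rw [derivative_smul]
  norm_num at ha
  rw [ha, smul_comm]
  exact (lemD (by simpa using Nat.lt_succ_iff.mp (Finset.mem_range.mp hk))).zsmul a

lemma lemA {n : ℕ} {P : Polynomial ℚ} (hIV : IV P) (hdeg : P.natDegree ≤ n) (j : ℕ) :
    IV ((dlcm n : ℚ)^j • derivative^[j] P)
      ∧ ((dlcm n : ℚ)^j • derivative^[j] P).natDegree ≤ n := by
  induction j with
  | zero => simpa using ⟨hIV, hdeg⟩
  | succ j ih =>
    obtain ⟨ih1, ih2⟩ := ih
    have key : (dlcm n : ℚ)^(j+1) • derivative^[j+1] P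
        = (dlcm n : ℚ) • derivative ((dlcm n : ℚ)^j • derivative^[j] P) := by
      rw [derivative_smul, Function.iterate_succ_apply', smul_smul]
      congr 1
      ring
    constructor
    · rw [key]; exact lemK ih1 ih2
    · rw [key]
      calc ((dlcm n : ℚ) • derivative ((dlcm n : ℚ)^j • derivative^[j] P)).natDegree
          ≤ (derivative ((dlcm n : ℚ)^j • derivative^[j] P)).natDegree :=
            natDegree_smul_le _ _
        _ ≤ ((dlcm n : ℚ)^j • derivative^[j] P).natDegree - 1 := natDegree_derivative_le _
        _ ≤ n := by omega

lemma lemMul {n : ℕ} {P Q : Polynomial ℚ}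
    (hP : ∀ j, IV ((dlcm n : ℚ)^j • derivative^[j] P))
    (hQ : ∀ j, IV ((dlcm n : ℚ)^j • derivative^[j] Q)) (j : ℕ) :
    IV ((dlcm n : ℚ)^j • derivative^[j] (P * Q)) := by
  rw [Polynomial.iterate_derivative_mul, Finset.smul_sum]
  apply IV.sum
  intro k hk
  have hk' : k ≤ j := Nat.lt_succ_iff.mp (Finset.mem_range.mp hk)
  have key : (dlcm n : ℚ)^j • ((j.choose k) • (derivative^[j-k] P * derivative^[k] Q))
      = (j.choose k) • (((dlcm n:ℚ)^(j-k) • derivative^[j-k] P)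
          * ((dlcm n:ℚ)^k • derivative^[k] Q)) := by
    rw [smul_mul_smul_comm, ← pow_add, Nat.sub_add_cancel hk', smul_comm]
  rw [key]
  exact ((hP (j-k)).mul (hQ k)).nsmul _

lemma iv_comp_shift {P : Polynomial ℚ} (hP : IV P) (c : ℕ) :
    IV (P.comp (X - C (c:ℚ))) := by
  intro z
  obtain ⟨a, ha⟩ := hP (z - c)
  refine ⟨a, ?_⟩
  rw [Polynomial.eval_comp]
  simp only [eval_sub, eval_X, eval_C]
  rw [show (z:ℚ) - (c:ℚ) = ((z - (c:ℤ) : ℤ):ℚ) by push_cast; ring]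
  exact_mod_cast ha

lemma deriv_comp_shift (P : Polynomial ℚ) (c : ℚ) (j : ℕ) :
    derivative^[j] (P.comp (X - C c)) = (derivative^[j] P).comp (X - C c) := by
  induction j with
  | zero => simp
  | succ j ih =>
    rw [Function.iterate_succ_apply', ih, Polynomial.derivative_comp]
    simp [← Function.iterate_succ_apply']

lemma lemShift {n : ℕ} {P : Polynomial ℚ}
    (hP : ∀ j, IV ((dlcm n : ℚ)^j • derivative^[j] P)) (c : ℕ) (j : ℕ) :
    IV ((dlcm n : ℚ)^j • derivative^[j] (P.comp (X - C (c:ℚ)))) := by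
  rw [deriv_comp_shift, ← Polynomial.smul_comp]
  exact iv_comp_shift (hP j) c



lemma iv_qnsmul {P} (hP : IV P) (c : ℕ) : IV ((c : ℚ) • P) := by
  have := hP.zsmul (c : ℤ)
  simpa using this

lemma natDegree_binomPoly_le (k : ℕ) : (binomPoly k).natDegree ≤ k := by
  refine le_trans (natDegree_smul_le _ _) ?_
  rw [descPochhammer_natDegree]

lemma shift_shift (P : Polynomial ℚ) (a b : ℚ) :
    (P.comp (X - C a)).comp (X - C b) = P.comp (X - C (a + b)) := by
  rw [Polynomial.comp_assoc]
  congr 1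
  rw [Polynomial.sub_comp, Polynomial.X_comp, Polynomial.C_comp, map_add]
  ring

lemma dp_prod (n q r : ℕ) :
    descPochhammer ℚ (n*q + r)
      = (∏ i ∈ range q, (descPochhammer ℚ n).comp (X - C ((n*i : ℕ) : ℚ)))
        * (descPochhammer ℚ r).comp (X - C ((n*q : ℕ) : ℚ)) := by
  induction q with
  | zero => simp
  | succ q ih =>
    have hm : n*(q+1) + r = n + (n*q + r) := by ring
    have key := descPochhammer_mul (R := ℚ) n (n*q + r)
    rw [hm, ← key, ih, ← Polynomial.C_eq_natCast, Polynomial.mul_comp,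
      Polynomial.prod_comp]
    have e0 : ((X : Polynomial ℚ) - C (n:ℚ)) = X - C ((n:ℕ):ℚ) := by norm_num
    rw [e0]
    simp only [shift_shift]
    rw [Finset.prod_range_succ']
    have e1 : (descPochhammer ℚ n).comp (X - C ((n*0 : ℕ):ℚ)) = descPochhammer ℚ n := by
      norm_num
    rw [e1]
    have e2 : ∀ i, ((n*i : ℕ):ℚ) + ((n:ℕ):ℚ) = ((n*(i+1) : ℕ):ℚ) := by
      intro i; push_cast; ring
    have e3 : ((n*q : ℕ):ℚ) + ((n:ℕ):ℚ) = ((n*(q+1) : ℕ):ℚ) := by push_cast; ring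
    rw [e3]
    have e4 : (∏ i ∈ range q,
        (descPochhammer ℚ n).comp (X - C (((n*i : ℕ):ℚ) + ((n:ℕ):ℚ))))
        = ∏ i ∈ range q, (descPochhammer ℚ n).comp (X - C ((n*(i+1) : ℕ):ℚ)) := by
      apply Finset.prod_congr rfl
      intro i _
      rw [e2]
    rw [e4]
    ring

lemma fac_dvd (n q r : ℕ) : n.factorial ^ q * r.factorial ∣ (n*q + r).factorial := by
  induction q with
  | zero => simp
  | succ q ih =>
    have h1 : (n*q + r).factorial * n.factorial ∣ (n*q + r + n).factorial := by
      simpa using Nat.factorial_mul_factorial_dvd_factorial_add (n*q+r) n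
    have hm : n*(q+1) + r = (n*q + r) + n := by ring
    rw [hm, pow_succ]
    calc n.factorial ^ q * n.factorial * r.factorial
        = (n.factorial ^ q * r.factorial) * n.factorial := by ring
      _ ∣ (n*q+r).factorial * n.factorial := mul_dvd_mul_right ih _
      _ ∣ _ := h1

lemma binom_prod (n q r : ℕ) :
    ((((n*q+r).factorial / (n.factorial ^ q * r.factorial) : ℕ) : ℚ)) • binomPoly (n*q+r)
      = (∏ i ∈ range q, (binomPoly n).comp (X - C ((n*i : ℕ) : ℚ)))
        * (binomPoly r).comp (X - C ((n*q : ℕ) : ℚ)) := by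
  have hc : (((n*q+r).factorial / (n.factorial ^ q * r.factorial) : ℕ) : ℚ)
      = ((n*q+r).factorial : ℚ) / ((n.factorial ^ q * r.factorial : ℕ) : ℚ) := by
    rw [Nat.cast_div (fac_dvd n q r)]
    positivity
  have hC : (C (((n.factorial : ℚ))⁻¹))^q * C (((r.factorial : ℚ))⁻¹)
      = C ((((n.factorial ^ q * r.factorial : ℕ) : ℚ))⁻¹) := by
    rw [← map_pow, ← map_mul]
    congr 1
    push_cast
    rw [mul_inv, inv_pow]
  have hR : (∏ i ∈ range q, (binomPoly n).comp (X - C ((n*i : ℕ) : ℚ)))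
        * (binomPoly r).comp (X - C ((n*q : ℕ) : ℚ))
      = C ((((n.factorial ^ q * r.factorial : ℕ) : ℚ))⁻¹) * descPochhammer ℚ (n*q+r) := by
    simp only [binomPoly, Polynomial.smul_eq_C_mul, Polynomial.mul_comp, Polynomial.C_comp]
    rw [Finset.prod_mul_distrib, Finset.prod_const, Finset.card_range, dp_prod n q r, ← hC]
    ring
  rw [hR, hc, binomPoly, smul_smul, ← Polynomial.smul_eq_C_mul]
  congr 1
  have h1 : (((n*q+r).factorial : ℚ)) ≠ 0 := by positivity
  have h2 : (((n.factorial ^ q * r.factorial : ℕ) : ℚ)) ≠ 0 := by positivity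
  field_simp

/-- For `λ ≤ n`, the polynomial `d_n^λ · (d/dt)^λ [ binom(m; n,…,n) · C(t,m) ]`
is integer-valued. -/
theorem multinom_binomPoly_deriv_integerValued (lam n m : ℕ) (hlam : lam ≤ n) :
    ∀ z : ℤ, ∃ a : ℤ,
      (((dlcm n : ℚ) ^ lam) •
        ((Polynomial.derivative ^ lam : Polynomial ℚ →ₗ[ℚ] Polynomial ℚ)
          ((multinomRep m n : ℚ) • binomPoly m))).eval (z : ℚ) = (a : ℚ) := by
  have hpow : ∀ (Q : Polynomial ℚ),
      (Polynomial.derivative ^ lam : Polynomial ℚ →ₗ[ℚ] Polynomial ℚ) Q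
        = (⇑derivative)^[lam] Q := fun Q => Module.End.pow_apply _ _ _
  rcases Nat.eq_zero_or_pos n with hn | hn
  · subst hn
    have : lam = 0 := Nat.le_zero.mp hlam
    subst this
    simp only [pow_zero, one_smul, hpow, Function.iterate_zero, id_eq]
    exact iv_qnsmul (iv_binomPoly m) _
  · set q := m / n with hq
    set r := m % n with hr
    have hdm := Nat.div_add_mod m n
    rw [← hq, ← hr] at hdm
    have hm : m = n * q + r := by omega
    have hmr : m - n * q = r := by omega
    have hrep : multinomRep m n
        = (n*q+r).factorial / (n.factorial ^ q * r.factorial) := by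
      rw [multinomRep, ← hq, hmr, ← hm]
    rw [← hm] at hrep
    have hprod := binom_prod n q r
    rw [← hm] at hprod
    rw [← hrep] at hprod
    have hAn : ∀ j, IV ((dlcm n : ℚ)^j • (⇑derivative)^[j] (binomPoly n)) :=
      fun j => (lemA (iv_binomPoly n) (natDegree_binomPoly_le n) j).1
    have hAr : ∀ j, IV ((dlcm n : ℚ)^j • (⇑derivative)^[j] (binomPoly r)) :=
      fun j => (lemA (iv_binomPoly r) (le_trans (natDegree_binomPoly_le r)
        (le_of_lt (by rw [hr]; exact Nat.mod_lt m hn))) j).1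
    have hOne : ∀ j, IV ((dlcm n : ℚ)^j • (⇑derivative)^[j] (1 : Polynomial ℚ)) := by
      intro j
      cases j with
      | zero => intro z; exact ⟨1, by simp⟩
      | succ j =>
        intro z
        refine ⟨0, by simp [Function.iterate_succ_apply]⟩
    have hProd : ∀ j, IV ((dlcm n : ℚ)^j •
        (⇑derivative)^[j] (∏ i ∈ range q, (binomPoly n).comp (X - C ((n*i : ℕ) : ℚ)))) := by
      induction q with
      | zero => simpa using hOne
      | succ q ihq =>
        intro j
        rw [Finset.prod_range_succ]
        exact lemMul ihq (lemShift hAn (n*q)) j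
    intro z
    rw [hpow, hprod]
    exact lemMul hProd (lemShift hAr (n*q)) lam z
end

section
/- Let p be prime, l ≥ 0 and m ≥ 1 integers, d' a positive integer prime to p, and set D = d'·p^l, N = p^l(p^m − 1), where m = ⌊log_p(n·d')⌋ + 1 for a positive integer n. For every nonnegative integer j and every x ∈ Z_{≥0}: C(N + D·x + j, N) ≡ 1 mod p if x ≡ −(d')^{−1}·⌊j/p^l⌋ mod p^m, and C(N + D·x + j, N) ≡ 0 mod p otherwise. (Here (d')^{−1} is the inverse of d' modulo p^m.) -/
/-- Block version of Lucas' theorem: for a prime `p` and `b, d < p ^ k`,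
`C(p^k·a + b, p^k·c + d) ≡ C(a,c)·C(b,d) [MOD p]`. -/
lemma choose_pow_mul_add_modEq (p : ℕ) [Fact p.Prime] (k : ℕ) :
    ∀ a b c d : ℕ, b < p ^ k → d < p ^ k →
      (p ^ k * a + b).choose (p ^ k * c + d) ≡ a.choose c * b.choose d [MOD p] := by
  induction k with
  | zero =>
      intro a b c d hb hd
      simp only [pow_zero, Nat.lt_one_iff] at hb hd
      subst hb; subst hd
      simpa using Nat.ModEq.refl _
  | succ k ih =>
      intro a b c d hb hd
      have hp : 0 < p := (Fact.out : p.Prime).pos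
      have h1 : p ^ (k+1) * a + b = p * (p ^ k * a + b / p) + b % p := by
        conv_lhs => rw [← Nat.div_add_mod b p]
        ring
      have h2 : p ^ (k+1) * c + d = p * (p ^ k * c + d / p) + d % p := by
        conv_lhs => rw [← Nat.div_add_mod d p]
        ring
      have step := (Choose.choose_modEq_choose_mod_mul_choose_div_nat
        (p := p) (n := p ^ (k+1) * a + b) (k := p ^ (k+1) * c + d))
      have hbmod : (p ^ (k+1) * a + b) % p = b % p := by
        rw [pow_succ, Nat.mul_comm (p^k) p, Nat.mul_assoc, Nat.mul_add_mod]
      have hdmod : (p ^ (k+1) * c + d) % p = d % p := by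
        rw [pow_succ, Nat.mul_comm (p^k) p, Nat.mul_assoc, Nat.mul_add_mod]
      have hbdiv : (p ^ (k+1) * a + b) / p = p ^ k * a + b / p := by
        rw [pow_succ, Nat.mul_comm (p^k) p, Nat.mul_assoc, Nat.add_comm,
          Nat.add_mul_div_left _ _ hp, Nat.add_comm]
      have hddiv : (p ^ (k+1) * c + d) / p = p ^ k * c + d / p := by
        rw [pow_succ, Nat.mul_comm (p^k) p, Nat.mul_assoc, Nat.add_comm,
          Nat.add_mul_div_left _ _ hp, Nat.add_comm]
      rw [hbmod, hdmod, hbdiv, hddiv] at step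
      have hbp : b / p < p ^ k := Nat.div_lt_of_lt_mul (by rwa [← pow_succ'] )
      have hdp : d / p < p ^ k := Nat.div_lt_of_lt_mul (by rwa [← pow_succ'] )
      have ihstep := ih a (b / p) c (d / p) hbp hdp
      have bd := (Choose.choose_modEq_choose_mod_mul_choose_div_nat
        (p := p) (n := b) (k := d)).symm
      calc (p ^ (k+1) * a + b).choose (p ^ (k+1) * c + d)
          ≡ (b % p).choose (d % p) * ((p ^ k * a + b / p).choose (p ^ k * c + d / p)) [MOD p] :=
            step
        _ ≡ (b % p).choose (d % p) * (a.choose c * (b / p).choose (d / p)) [MOD p] :=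
            Nat.ModEq.mul_left _ ihstep
        _ = a.choose c * ((b % p).choose (d % p) * (b / p).choose (d / p)) := by ring
        _ ≡ a.choose c * b.choose d [MOD p] := Nat.ModEq.mul_left _ bd

/-- Let `p` be prime, `l ≥ 0`, `n ≥ 1`, `d'` positive and prime to `p`, and set
`m = ⌊log_p(n·d')⌋ + 1`, `D = d'·p^l`, `N = p^l(p^m - 1)`. Then for all
nonnegative integers `j` and `x`:
`C(N + D·x + j, N) ≡ 1 mod p` if `x ≡ -(d')⁻¹·⌊j/p^l⌋ mod p^m`
(equivalently `p^m ∣ d'·x + ⌊j/p^l⌋`), and `C(N + D·x + j, N) ≡ 0 mod p`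
otherwise. -/
theorem choose_shift_mod_p (p : ℕ) (hp : p.Prime) (l n d' : ℕ)
    (hn : 0 < n) (hd' : 0 < d') (hcop : Nat.Coprime d' p)
    (m N D : ℕ)
    (hm : m = Nat.log p (n * d') + 1)
    (hN : N = p ^ l * (p ^ m - 1))
    (hD : D = d' * p ^ l)
    (j x : ℕ) :
    (p ^ m ∣ d' * x + j / p ^ l → (N + D * x + j).choose N ≡ 1 [MOD p]) ∧
    (¬ p ^ m ∣ d' * x + j / p ^ l → (N + D * x + j).choose N ≡ 0 [MOD p]) := by
  haveI : Fact p.Prime := ⟨hp⟩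
  have hppos : 0 < p := hp.pos
  have hpl : 0 < p ^ l := Nat.pow_pos hppos
  have hpm1 : 1 < p ^ m := by
    have : 1 ≤ m := by omega
    calc 1 < p := hp.one_lt
      _ ≤ p ^ m := Nat.le_self_pow (by omega) p
  set q := j / p ^ l with hq
  set r := j % p ^ l with hr
  set K := d' * x + q with hK
  have hrlt : r < p ^ l := Nat.mod_lt _ hpl
  have hdecomp : N + D * x + j = p ^ l * (p ^ m - 1 + K) + r := by
    have hj : j = p ^ l * q + r := (Nat.div_add_mod j (p ^ l)).symm
    rw [hN, hD, hK]
    rw [hj]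
    ring
  have hNd : N = p ^ l * (p ^ m - 1) + 0 := by omega
  -- first reduction: strip the p^l block
  have main : (N + D * x + j).choose N ≡ (p ^ m - 1 + K).choose (p ^ m - 1) * r.choose 0 [MOD p] := by
    rw [hdecomp, hNd]
    exact choose_pow_mul_add_modEq p l _ r _ 0 hrlt hpl
  rw [Nat.choose_zero_right, Nat.mul_one] at main
  constructor
  · intro hdvd
    obtain ⟨t, ht⟩ := hdvd
    have h2 : p ^ m - 1 + K = p ^ m * t + (p ^ m - 1) := by omega
    have step2 : (p ^ m - 1 + K).choose (p ^ m - 1) ≡ t.choose 0 * (p ^ m - 1).choose (p ^ m - 1) [MOD p] := by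
      rw [h2]
      have : (p ^ m - 1 : ℕ) = p ^ m * 0 + (p ^ m - 1) := by omega
      nth_rewrite 2 [this]
      exact choose_pow_mul_add_modEq p m t (p ^ m - 1) 0 (p ^ m - 1) (by omega) (by omega)
    rw [Nat.choose_zero_right, Nat.choose_self, Nat.one_mul] at step2
    exact main.trans step2
  · intro hndvd
    set s := K % (p ^ m) with hs
    have hspos : 0 < s := Nat.pos_of_ne_zero (fun h => hndvd (Nat.dvd_of_mod_eq_zero h))
    have hslt : s < p ^ m := Nat.mod_lt _ (by omega)
    have hKd : K = p ^ m * (K / p ^ m) + s := (Nat.div_add_mod K (p ^ m)).symm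
    have hmul : p ^ m * (K / p ^ m + 1) = p ^ m * (K / p ^ m) + p ^ m := by ring
    have h2 : p ^ m - 1 + K = p ^ m * (K / p ^ m + 1) + (s - 1) := by omega
    have step2 : (p ^ m - 1 + K).choose (p ^ m - 1) ≡
        (K / p ^ m + 1).choose 0 * (s - 1).choose (p ^ m - 1) [MOD p] := by
      rw [h2]
      have hh : (p ^ m - 1 : ℕ) = p ^ m * 0 + (p ^ m - 1) := by omega
      nth_rewrite 1 [hh]
      exact choose_pow_mul_add_modEq p m _ (s - 1) 0 (p ^ m - 1) (by omega) (by omega)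
    have hlt : s - 1 < p ^ m - 1 := Nat.sub_lt_sub_right hspos hslt
    rw [Nat.choose_zero_right, Nat.one_mul, Nat.choose_eq_zero_of_lt hlt] at step2
    exact main.trans step2
end

section
/- Let 0 ≤ s ≤ r−1, M ∈ M_{(s+1)×(r+1)}(C_p), L a 1×(r+1) row over C_p, ξ ∈ C_p^{r+1}. With H_p(M) = max_J |det M_J|_p over (s+1)-subsets J of columns and Δ_p as above (Δ_p(L) = |L·ξ|_p for a single row), if H_p(M)·Δ_p(L) > H_p(L)·Δ_p(M), then Δ_p(M⊕L) = H_p(M)·Δ_p(L). -/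
open scoped Matrix


/-- `H_p(A) = max_J |det A_J|_p` over sets `J` of `m` columns. -/
noncomputable def heightP {𝕃 : Type*} [NormedField 𝕃] {m n : ℕ}
    (A : Matrix (Fin m) (Fin n) 𝕃) : NNReal :=
  Finset.univ.sup fun e : Fin m ↪ Fin n => ‖(A.submatrix id e).det‖₊

/-- `Δ_p(A) = max_{J'} |det A_{J',ξ}|_p` over sets `J'` of `m` columns of the
`(m+1)`-row matrix `A`, where `A_{J',ξ}` is formed by the columns `J'` of `A`
together with the column `A·ξ`. For a single row `L` this is `|L·ξ|_p`. -/
noncomputable def deltaP {𝕃 : Type*} [NormedField 𝕃] {m n : ℕ}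
    (ξ : Fin n → 𝕃) (A : Matrix (Fin (m + 1)) (Fin n) 𝕃) : NNReal :=
  Finset.univ.sup fun e : Fin m ↪ Fin n =>
    ‖(Matrix.of fun i (j : Fin (m + 1)) =>
        Fin.snoc (fun j' : Fin m => A i (e j')) (A.mulVec ξ i) j).det‖₊

lemma nnnorm_add_eq_left_aux {𝕃 : Type*} [NormedField 𝕃] [IsUltrametricDist 𝕃]
    (a b : 𝕃) (h : ‖b‖₊ < ‖a‖₊) : ‖a + b‖₊ = ‖a‖₊ := by
  refine le_antisymm ((IsUltrametricDist.nnnorm_add_le_max a b).trans (max_le le_rfl h.le)) ?_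
  have h2 : ‖a‖₊ ≤ max ‖a + b‖₊ ‖-b‖₊ := by
    calc ‖a‖₊ = ‖(a + b) + (-b)‖₊ := by ring_nf
    _ ≤ _ := IsUltrametricDist.nnnorm_add_le_max _ _
  rcases max_cases ‖a + b‖₊ ‖-b‖₊ with ⟨he, _⟩ | ⟨he, _⟩
  · rwa [he] at h2
  · rw [he, nnnorm_neg] at h2
    exact absurd h2 h.not_ge

/-- For `0 ≤ s ≤ r-1`, a matrix `M ∈ M_{(s+1)×(r+1)}(ℂ_p)` (here over an
ultrametric normed field `𝕃`), a row `L` and `ξ ∈ 𝕃^{r+1}`: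
if `H_p(M)·Δ_p(L) > H_p(L)·Δ_p(M)`, then `Δ_p(M ⊕ L) = H_p(M)·Δ_p(L)`. -/
theorem deltaP_append_row (𝕃 : Type*) [NormedField 𝕃] [IsUltrametricDist 𝕃]
    (s r : ℕ) (hsr : s + 1 ≤ r)
    (M : Matrix (Fin (s + 1)) (Fin (r + 1)) 𝕃) (L : Fin (r + 1) → 𝕃)
    (ξ : Fin (r + 1) → 𝕃)
    (h : heightP (Matrix.of ![L]) * deltaP ξ M <
      heightP M * deltaP ξ (Matrix.of ![L])) :
    deltaP ξ (Matrix.of (Fin.snoc M L)) = heightP M * deltaP ξ (Matrix.of ![L]) := by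
  classical
  set A : Matrix (Fin (s + 2)) (Fin (r + 1)) 𝕃 := Matrix.of (Fin.snoc M L) with hA
  -- basic facts about A
  have hArow : ∀ i : Fin (s + 1), ∀ j, A (Fin.castSucc i) j = M i j := by
    intro i j; exact congrFun (Fin.snoc_castSucc (α := fun _ => Fin (r + 1) → 𝕃) (x := L) (p := M) i) j
  have hAlast : ∀ j, A (Fin.last (s + 1)) j = L j := by
    intro j; exact congrFun (Fin.snoc_last (α := fun _ => Fin (r + 1) → 𝕃) (x := L) (p := M)) j
  -- deltaP of the single row L
  have hNE0 : Nonempty (Fin 0 ↪ Fin (r + 1)) := ⟨Function.Embedding.ofIsEmpty⟩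
  have dL : deltaP ξ (Matrix.of ![L]) = ‖L ⬝ᵥ ξ‖₊ := by
    unfold deltaP
    have : ∀ e : Fin 0 ↪ Fin (r + 1),
        ‖(Matrix.of fun i (j : Fin 1) =>
          Fin.snoc (fun j' : Fin 0 => (Matrix.of ![L]) i (e j'))
            ((Matrix.of ![L]).mulVec ξ i) j).det‖₊ = ‖L ⬝ᵥ ξ‖₊ := by
      intro e
      rw [Matrix.det_fin_one]
      have h0 : (0 : Fin 1) = Fin.last 0 := rfl
      simp only [Matrix.of_apply, h0, Fin.snoc_last]
      congr 1
    simp only [this]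
    exact Finset.sup_const Finset.univ_nonempty _
  rw [dL]
  -- the big minors
  set N : (Fin (s + 1) ↪ Fin (r + 1)) → Matrix (Fin (s + 2)) (Fin (s + 2)) 𝕃 :=
    fun e => Matrix.of fun (i : Fin (s + 2)) (j : Fin (s + 2)) =>
      (Fin.snoc (α := fun _ => 𝕃) (fun j' : Fin (s + 1) => A i (e j')) (A.mulVec ξ i) j) with hN
  have hdelta : deltaP ξ A = Finset.univ.sup fun e : Fin (s + 1) ↪ Fin (r + 1) =>
      ‖(N e).det‖₊ := rfl
  -- expansion terms along the last row
  have hexp : ∀ e, (N e).det = ∑ j : Fin (s + 2),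
      (-1 : 𝕃) ^ ((Fin.last (s + 1) : ℕ) + (j : ℕ)) * N e (Fin.last (s + 1)) j *
        ((N e).submatrix (Fin.last (s + 1)).succAbove j.succAbove).det :=
    fun e => Matrix.det_succ_row (N e) (Fin.last (s + 1))
  -- last entry of the expansion row
  have hentry_last : ∀ e, N e (Fin.last (s + 1)) (Fin.last (s + 1)) = L ⬝ᵥ ξ := by
    intro e
    show Fin.snoc (α := fun _ => 𝕃) (fun j' : Fin (s + 1) => A (Fin.last (s + 1)) (e j'))
        (A.mulVec ξ (Fin.last (s + 1))) (Fin.last (s + 1)) = L ⬝ᵥ ξ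
    rw [Fin.snoc_last]
    show (fun j => A (Fin.last (s + 1)) j) ⬝ᵥ ξ = L ⬝ᵥ ξ
    simp only [hAlast]
  have hentry_cast : ∀ e, ∀ j : Fin (s + 1),
      N e (Fin.last (s + 1)) (Fin.castSucc j) = L (e j) := by
    intro e j
    show Fin.snoc (α := fun _ => 𝕃) (fun j' : Fin (s + 1) => A (Fin.last (s + 1)) (e j'))
        (A.mulVec ξ (Fin.last (s + 1))) (Fin.castSucc j) = L (e j)
    rw [Fin.snoc_castSucc, hAlast]
  -- the minor for the last column is M restricted to columns e
  have hminor_last : ∀ e, (N e).submatrix (Fin.last (s + 1)).succAbove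
      (Fin.last (s + 1)).succAbove = M.submatrix id e := by
    intro e
    ext i k
    simp only [Matrix.submatrix_apply, Fin.succAbove_last, id]
    show Fin.snoc (α := fun _ => 𝕃) (fun j' : Fin (s + 1) => A (Fin.castSucc i) (e j'))
        (A.mulVec ξ (Fin.castSucc i)) (Fin.castSucc k) = M i (e k)
    rw [Fin.snoc_castSucc, hArow]
  -- the minor for column `castSucc j₀` is a deltaP-minor of M
  have hminor_cast : ∀ e, ∀ j₀ : Fin (s + 1),
      (N e).submatrix (Fin.last (s + 1)).succAbove (Fin.castSucc j₀).succAbove =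
      Matrix.of fun i (k : Fin (s + 1)) =>
        Fin.snoc (fun k' : Fin s => M i (((Fin.succAboveEmb j₀).trans e) k'))
          (M.mulVec ξ i) k := by
    intro e j₀
    ext i k
    simp only [Matrix.submatrix_apply, Fin.succAbove_last, Matrix.of_apply]
    refine Fin.lastCases ?_ ?_ k
    · have hs1 : (Fin.castSucc j₀).succAbove (Fin.last s) = Fin.last (s + 1) :=
        Fin.succAbove_ne_last_last (Fin.ne_of_lt (Fin.castSucc_lt_last j₀))
      rw [hs1, Fin.snoc_last]
      show Fin.snoc (α := fun _ => 𝕃) (fun j' : Fin (s+1) => A (Fin.castSucc i) (e j'))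
          (A.mulVec ξ (Fin.castSucc i)) (Fin.last (s+1)) = M.mulVec ξ i
      rw [Fin.snoc_last]
      show (fun j => A (Fin.castSucc i) j) ⬝ᵥ ξ = (fun j => M i j) ⬝ᵥ ξ
      simp only [hArow]
    · intro k'
      rw [Fin.castSucc_succAbove_castSucc, Fin.snoc_castSucc]
      show Fin.snoc (α := fun _ => 𝕃) (fun j' : Fin (s+1) => A (Fin.castSucc i) (e j'))
          (A.mulVec ξ (Fin.castSucc i)) (Fin.castSucc (j₀.succAbove k')) =
        M i (((Fin.succAboveEmb j₀).trans e) k')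
      rw [Fin.snoc_castSucc, hArow]
      rfl
  -- norm bound on the deltaP-minors of M
  have hdM : ∀ f : Fin s ↪ Fin (r + 1),
      ‖(Matrix.of fun i (k : Fin (s + 1)) =>
          Fin.snoc (fun k' : Fin s => M i (f k')) (M.mulVec ξ i) k).det‖₊ ≤ deltaP ξ M :=
    by
    intro f
    unfold deltaP
    exact Finset.le_sup (f := fun e : Fin s ↪ Fin (r + 1) =>
      ‖(Matrix.of fun i (j : Fin (s + 1)) =>
        Fin.snoc (fun j' : Fin s => M i (e j')) (M.mulVec ξ i) j).det‖₊) (Finset.mem_univ f)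
  -- norm bound on individual entries of L
  have hLentry : ∀ j : Fin (r + 1), ‖L j‖₊ ≤ heightP (Matrix.of ![L]) := by
    intro j
    unfold heightP
    have h1 := Finset.le_sup (f := fun e : Fin 1 ↪ Fin (r + 1) =>
      ‖((Matrix.of ![L]).submatrix id e).det‖₊)
      (Finset.mem_univ (⟨fun _ => j, fun a b _ => Subsingleton.elim a b⟩ : Fin 1 ↪ Fin (r + 1)))
    simp [Matrix.det_fin_one] at h1 ⊢; exact h1
  have hhM : ∀ e : Fin (s + 1) ↪ Fin (r + 1),
      ‖(M.submatrix id e).det‖₊ ≤ heightP M := by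
    intro e
    unfold heightP
    exact Finset.le_sup (f := fun e : Fin (s + 1) ↪ Fin (r + 1) =>
      ‖(M.submatrix id e).det‖₊) (Finset.mem_univ e)
  -- norm of each term of the expansion
  have hterm_norm : ∀ (e) (j : Fin (s + 2)),
      ‖(-1 : 𝕃) ^ ((Fin.last (s + 1) : ℕ) + (j : ℕ)) * N e (Fin.last (s + 1)) j *
        ((N e).submatrix (Fin.last (s + 1)).succAbove j.succAbove).det‖₊ =
      ‖N e (Fin.last (s + 1)) j‖₊ *
        ‖((N e).submatrix (Fin.last (s + 1)).succAbove j.succAbove).det‖₊ := by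
    intro e j
    rw [nnnorm_mul, nnnorm_mul, nnnorm_pow, nnnorm_neg, nnnorm_one, one_pow, one_mul]
  have hterm_last : ∀ e,
      ‖(-1 : 𝕃) ^ ((Fin.last (s + 1) : ℕ) + ((Fin.last (s + 1)) : ℕ)) *
        N e (Fin.last (s + 1)) (Fin.last (s + 1)) *
        ((N e).submatrix (Fin.last (s + 1)).succAbove
          (Fin.last (s + 1)).succAbove).det‖₊ =
      ‖L ⬝ᵥ ξ‖₊ * ‖(M.submatrix id e).det‖₊ := by
    intro e
    rw [hterm_norm, hentry_last, hminor_last]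
  have hterm_cast : ∀ e, ∀ j₀ : Fin (s + 1),
      ‖(-1 : 𝕃) ^ ((Fin.last (s + 1) : ℕ) + ((Fin.castSucc j₀ : Fin (s + 2)) : ℕ)) *
        N e (Fin.last (s + 1)) (Fin.castSucc j₀) *
        ((N e).submatrix (Fin.last (s + 1)).succAbove
          (Fin.castSucc j₀).succAbove).det‖₊ ≤
      heightP (Matrix.of ![L]) * deltaP ξ M := by
    intro e j₀
    rw [hterm_norm, hentry_cast, hminor_cast]
    exact mul_le_mul' (hLentry _) (hdM _)
  have hlt : heightP (Matrix.of ![L]) * deltaP ξ M < heightP M * ‖L ⬝ᵥ ξ‖₊ := by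
    rw [← dL]; exact h
  have hlt' : heightP (Matrix.of ![L]) * deltaP ξ M < ‖L ⬝ᵥ ξ‖₊ * heightP M := by
    rw [mul_comm ‖L ⬝ᵥ ξ‖₊ (heightP M)]; exact hlt
  -- upper bound
  have hub : ∀ e, ‖(N e).det‖₊ ≤ heightP M * ‖L ⬝ᵥ ξ‖₊ := by
    intro e
    rw [hexp]
    apply IsUltrametricDist.nnnorm_sum_le_of_forall_le
    intro j _
    refine Fin.lastCases ?_ ?_ j
    · rw [hterm_last]
      calc ‖L ⬝ᵥ ξ‖₊ * ‖(M.submatrix id e).det‖₊ ≤ ‖L ⬝ᵥ ξ‖₊ * heightP M :=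
            mul_le_mul' le_rfl (hhM e)
        _ = heightP M * ‖L ⬝ᵥ ξ‖₊ := mul_comm _ _
    · intro j₀
      exact (hterm_cast e j₀).trans hlt.le
  -- lower bound: pick e₀ attaining heightP M
  have hNE1 : Nonempty (Fin (s + 1) ↪ Fin (r + 1)) :=
    ⟨⟨Fin.castLE (by omega), Fin.castLE_injective _⟩⟩
  obtain ⟨e₀, -, he₀⟩ := Finset.exists_mem_eq_sup (Finset.univ : Finset (Fin (s+1) ↪ Fin (r+1)))
    Finset.univ_nonempty (fun e => ‖(M.submatrix id e).det‖₊)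
  have hM0 : heightP M = ‖(M.submatrix id e₀).det‖₊ := he₀
  have hval : ‖(N e₀).det‖₊ = heightP M * ‖L ⬝ᵥ ξ‖₊ := by
    rw [hexp, Fin.sum_univ_castSucc, add_comm]
    refine (nnnorm_add_eq_left_aux _ _ ?_).trans ?_
    · rw [hterm_last, ← hM0]
      refine lt_of_le_of_lt ?_ hlt'
      exact IsUltrametricDist.nnnorm_sum_le_of_forall_le fun j₀ _ => hterm_cast e₀ j₀
    · rw [hterm_last, ← hM0]
      exact mul_comm _ _
  refine le_antisymm ?_ ?_
  · rw [hdelta]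
    exact Finset.sup_le fun e _ => hub e
  · rw [hdelta, ← hval]
    exact Finset.le_sup (f := fun e : Fin (s + 1) ↪ Fin (r + 1) => ‖(N e).det‖₊)
      (Finset.mem_univ e₀)
end
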